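/- arXiv:1511.05987 — 2 statements merged into one kernel-verified Lean document; each statement's English description precedes it below -/
import Mathlib

section
/- Let X be a finite multiset of positive integers with total sum E. There exists a partition of X into X₁, X₂ with Σ_{x∈X₁} x = Σ_{x∈X₂} x if and only if there exist nonnegative reals α, β with α + β = E, α and β each expressible as a sum of a subset of X (the two subsets partitioning X), such that (2/3)α ≥ E/3 and α/3 + (2/3)β ≥ E/2. -/
/-- the directed-graph delivery instance is solvable iff Integer
Set Partition on the multiset X is solvable. -/
theorem partition_iff_delivery_conditions (X : Multiset ℕ)
    (hpos : ∀ x ∈ X, 0 < x) (E : ℕ) (hE : E = X.sum) :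
    (∃ X₁ X₂ : Multiset ℕ, X₁ + X₂ = X ∧ X₁.sum = X₂.sum) ↔
      (∃ X₁ X₂ : Multiset ℕ, X₁ + X₂ = X ∧
        (2 / 3 : ℝ) * (X₁.sum : ℝ) ≥ (E : ℝ) / 3 ∧
        (X₁.sum : ℝ) / 3 + (2 / 3 : ℝ) * (X₂.sum : ℝ) ≥ (E : ℝ) / 2) := by
  constructor
  · rintro ⟨X₁, X₂, hX, hsum⟩
    refine ⟨X₁, X₂, hX, ?_, ?_⟩ <;>
    · have hEsum : (E : ℝ) = (X₁.sum : ℝ) + (X₂.sum : ℝ) := by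
        have : X.sum = X₁.sum + X₂.sum := by rw [← hX, Multiset.sum_add]
        push_cast [hE, this]; ring
      have : (X₁.sum : ℝ) = (X₂.sum : ℝ) := by exact_mod_cast hsum
      rw [hEsum, this]; linarith
  · rintro ⟨X₁, X₂, hX, h1, h2⟩
    refine ⟨X₁, X₂, hX, ?_⟩
    have hEsum : (E : ℝ) = (X₁.sum : ℝ) + (X₂.sum : ℝ) := by
      have : X.sum = X₁.sum + X₂.sum := by rw [← hX, Multiset.sum_add]
      push_cast [hE, this]; ring
    have : (X₁.sum : ℝ) = (X₂.sum : ℝ) := by linarith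
    exact_mod_cast this
end

section
/- Consider the recurrence from algorithm Delivery2-on-the-Line: initialize e := 0, s := a_1; at step i, if a_i > e(i) + e + s then set e := e + e(i) and DC(i) := s + e − a_i; otherwise set s := s + (e + e(i) + max(a_i − s, 0))/2, then e := 0 and DC(i) := 2(s − a_i). Prove the invariant: after every step, either (e = 0 and DC(i) = 2(s − a_i) ≥ 0 in the case a_i ≤ s) or (DC(i) = s + e − a_i < 0 and e equals the sum of energies accumulated since the last reset). -/
/-- One step of algorithm Delivery2-on-the-Line: from state (s, acc) process the
agent at position `ai` with energy `ei`. -/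
noncomputable def d2step (ai ei : ℝ) : ℝ × ℝ → ℝ × ℝ := fun p =>
  if ai > ei + p.2 + p.1 then (p.1, p.2 + ei)
  else (p.1 + (p.2 + ei + max (ai - p.1) 0) / 2, 0)

/-- The state (s, acc) after processing agents 0, 1, …, i (0-indexed), starting
from the initial state (a 0, 0). -/
noncomputable def d2run (a e : ℕ → ℝ) : ℕ → ℝ × ℝ
  | 0 => (a 0, 0)
  | i + 1 => d2step (a (i + 1)) (e (i + 1)) (d2run a e i)

/-- The value DC(i) computed at step i. -/
noncomputable def d2DC (a e : ℕ → ℝ) (i : ℕ) : ℝ :=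
  if a (i + 1) > e (i + 1) + (d2run a e i).2 + (d2run a e i).1 then
    (d2run a e (i + 1)).1 + (d2run a e (i + 1)).2 - a (i + 1)
  else 2 * ((d2run a e (i + 1)).1 - a (i + 1))

lemma d2acc_nonneg (a e : ℕ → ℝ) (he : ∀ i, 0 ≤ e i) : ∀ i, 0 ≤ (d2run a e i).2 := by
  intro i
  induction i with
  | zero => simp [d2run]
  | succ n ih =>
    simp only [d2run, d2step]
    split
    · exact add_nonneg ih (he _)
    · simp

/-- shape invariant of Delivery2-on-the-Line: after every step,
either the accumulator was reset to 0 and DC(i) = 2(s' − aᵢ) ≥ 0, or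
DC(i) = s' + e' − aᵢ < 0 and e' accumulates the energies since the last reset. -/
theorem d2_invariant (a e : ℕ → ℝ) (ha : StrictMono a) (he : ∀ i, 0 ≤ e i) (i : ℕ) :
    (¬ a (i + 1) > e (i + 1) + (d2run a e i).2 + (d2run a e i).1 →
      (d2run a e (i + 1)).2 = 0 ∧
      d2DC a e i = 2 * ((d2run a e (i + 1)).1 - a (i + 1)) ∧
      0 ≤ d2DC a e i) ∧
    (a (i + 1) > e (i + 1) + (d2run a e i).2 + (d2run a e i).1 →
      d2DC a e i = (d2run a e (i + 1)).1 + (d2run a e (i + 1)).2 - a (i + 1) ∧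
      d2DC a e i < 0 ∧
      (d2run a e (i + 1)).2 = (d2run a e i).2 + e (i + 1)) := by
  constructor
  · intro h
    have hacc := d2acc_nonneg a e he i
    have hei := he (i + 1)
    simp only [d2run, d2step, d2DC, if_neg h] at *
    refine ⟨trivial, trivial, ?_⟩
    rcases le_or_gt (a (i+1)) (d2run a e i).1 with hle | hlt
    · rw [max_eq_right (by linarith)]
      linarith
    · rw [max_eq_left (by linarith)]
      push_neg at h
      linarith
  · intro h
    simp only [d2run, d2step, d2DC, if_pos h] at *
    exact ⟨trivial, by linarith, trivial⟩
end
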